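/- Let p_1, ..., p_n (n > 1) be positive reals with ∑ p_i = 1 - p_0 for some p_0 ∈ (0,1), and let γ > 0 satisfy ∑ p_i^γ = 1. Define Q(f), for f ∈ (0, p_0], as the number of finite words w over the alphabet {1,...,n} (including the empty word) whose probability Pr(w) = p_0 ∏_j p_{w_j} satisfies Pr(w) ≥ f. Then there exist constants c_1, c_2 such that c_1 < ln Q(p_0 e^{-x}) - γ x < c_2 for all x ≥ 0. -/

import Mathlib

/-- Probability of the word `w` over an `n`-letter alphabet in the monkey model:
`Pr(w) = p₀ * ∏_j p_{w_j}`. -/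
noncomputable def wordProb {n : ℕ} (p : Fin n → ℝ) (p₀ : ℝ) (w : List (Fin n)) : ℝ :=
  p₀ * (w.map p).prod

open Classical in
/-- With fuel `k`, the (intended) finite set of words `w` with `∏ q_{w_j} ≥ t`. -/
noncomputable def monkeyFs (n : ℕ) (q : Fin n → ℝ) : ℕ → ℝ → Finset (List (Fin n))
  | 0, _ => ∅
  | (k+1), t =>
    if t ≤ 1 then
      insert [] (Finset.univ.biUnion fun i => (monkeyFs n q k (t / q i)).image (i :: ·))
    else ∅

lemma monkey_prod_pos {n : ℕ} {q : Fin n → ℝ} (hq : ∀ i, 0 < q i) :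
    ∀ w : List (Fin n), 0 < (w.map q).prod
  | [] => by simp
  | i :: w => by
      simp only [List.map_cons, List.prod_cons]
      exact mul_pos (hq i) (monkey_prod_pos hq w)

lemma monkey_prod_le_one {n : ℕ} {q : Fin n → ℝ} (hq : ∀ i, 0 < q i) (hq1 : ∀ i, q i ≤ 1) :
    ∀ w : List (Fin n), (w.map q).prod ≤ 1
  | [] => by simp
  | i :: w => by
      simp only [List.map_cons, List.prod_cons]
      nlinarith [monkey_prod_pos hq w, monkey_prod_le_one hq hq1 w, hq i, hq1 i]

lemma monkey_mem_Fs {n : ℕ} {q : Fin n → ℝ} (hq : ∀ i, 0 < q i) (hq1 : ∀ i, q i < 1)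
    {M : ℝ} (hM0 : 0 < M) (hM : ∀ i, q i ≤ M) :
    ∀ (k : ℕ) (t : ℝ), 0 < t → M ^ k < t →
      ∀ w : List (Fin n), (w ∈ monkeyFs n q k t ↔ t ≤ (w.map q).prod) := by
  intro k
  induction k with
  | zero =>
    intro t ht hfuel w
    simp only [monkeyFs, Finset.notMem_empty, false_iff, not_le]
    have := monkey_prod_le_one hq (fun i => (hq1 i).le) w
    have : (w.map q).prod ≤ 1 := this
    simp at hfuel
    linarith
  | succ k ih =>
    intro t ht hfuel w
    by_cases htle : t ≤ 1
    · rw [monkeyFs, if_pos htle]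
      cases w with
      | nil =>
        simp only [Finset.mem_insert, true_or, true_iff]
        simpa using htle
      | cons i w' =>
        have hIH : w' ∈ monkeyFs n q k (t / q i) ↔ t / q i ≤ (w'.map q).prod := by
          apply ih
          · exact div_pos ht (hq i)
          · rw [lt_div_iff₀ (hq i)]
            calc M ^ k * q i ≤ M ^ k * M := by
                  have : (0:ℝ) ≤ M ^ k := by positivity
                  nlinarith [hM i]
              _ = M ^ (k+1) := by ring
              _ < t := hfuel
        constructor
        · intro hw
          rcases Finset.mem_insert.1 hw with h | h
          · exact absurd h (by simp)
          · rcases Finset.mem_biUnion.1 h with ⟨j, _, hj⟩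
            rcases Finset.mem_image.1 hj with ⟨a, ha, hae⟩
            injection hae with h1 h2
            have ha' : w' ∈ monkeyFs n q k (t / q i) := by rw [← h1, ← h2]; exact ha
            have := hIH.1 ha'
            rw [div_le_iff₀ (hq i)] at this
            simp only [List.map_cons, List.prod_cons]
            linarith [this]
        · intro hw
          simp only [List.map_cons, List.prod_cons] at hw
          apply Finset.mem_insert.2
          right
          apply Finset.mem_biUnion.2
          refine ⟨i, Finset.mem_univ _, Finset.mem_image.2 ⟨w', ?_, rfl⟩⟩
          apply hIH.2
          rw [div_le_iff₀ (hq i)]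
          linarith
    · rw [monkeyFs, if_neg htle]
      simp only [Finset.notMem_empty, false_iff, not_le]
      have := monkey_prod_le_one hq (fun i => (hq1 i).le) w
      linarith [not_le.1 htle]

lemma monkey_card_Fs_succ {n : ℕ} (q : Fin n → ℝ) (k : ℕ) {t : ℝ} (ht : t ≤ 1) :
    (monkeyFs n q (k+1) t).card = 1 + ∑ i, (monkeyFs n q k (t / q i)).card := by
  rw [monkeyFs, if_pos ht]
  rw [Finset.card_insert_of_notMem, Finset.card_biUnion]
  · rw [Finset.sum_congr rfl fun (i : Fin n) _ =>
      Finset.card_image_of_injective (monkeyFs n q k (t / q i)) List.cons_injective]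
    ring
  · intro i _ j _ hij
    refine Finset.disjoint_left.2 fun w hwi hwj => ?_
    rcases Finset.mem_image.1 hwi with ⟨a, _, rfl⟩
    rcases Finset.mem_image.1 hwj with ⟨b, _, hb⟩
    exact hij (by injection hb.symm)
  · intro h
    rcases Finset.mem_biUnion.1 h with ⟨i, _, hi⟩
    rcases Finset.mem_image.1 hi with ⟨a, _, ha⟩
    exact List.cons_ne_nil _ _ ha

lemma monkey_invariant {n : ℕ} (hn : 0 < n) {q : Fin n → ℝ} (hq : ∀ i, 0 < q i)
    (hqsum : ∑ i, q i = 1)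
    {M : ℝ} (hM0 : 0 < M) (hM : ∀ i, q i ≤ M)
    {m : ℝ} (hm0 : 0 < m) (hm : ∀ i, m ≤ q i) :
    ∀ (k : ℕ) (t : ℝ), 0 < t → M ^ k < t → t * m ≤ 1 →
      1 < t * (((n:ℝ) - 1) * (monkeyFs n q k t).card + 1) ∧
      t * m * (((n:ℝ) - 1) * (monkeyFs n q k t).card + 1) ≤ 1 := by
  intro k
  induction k with
  | zero =>
    intro t ht hfuel htm
    simp only [monkeyFs, Finset.card_empty, Nat.cast_zero, mul_zero, zero_add, mul_one]
    simp at hfuel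
    exact ⟨hfuel, htm⟩
  | succ k ih =>
    intro t ht hfuel htm
    by_cases htle : t ≤ 1
    · have hcard := monkey_card_Fs_succ q k (t := t) htle
      set e : ℝ := (n:ℝ) - 1 with he
      set c : Fin n → ℕ := fun i => (monkeyFs n q k (t / q i)).card with hc
      have hIH : ∀ i : Fin n, 1 < (t / q i) * (e * (c i : ℝ) + 1) ∧
          (t / q i) * m * (e * (c i : ℝ) + 1) ≤ 1 := by
        intro i
        apply ih
        · exact div_pos ht (hq i)
        · rw [lt_div_iff₀ (hq i)]
          calc M ^ k * q i ≤ M ^ k * M := by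
                have : (0:ℝ) ≤ M ^ k := by positivity
                nlinarith [hM i]
            _ = M ^ (k+1) := by ring
            _ < t := hfuel
        · rw [div_mul_eq_mul_div, div_le_one (hq i)]
          calc t * m ≤ 1 * m := by nlinarith [hm0]
            _ = m := one_mul m
            _ ≤ q i := hm i
      have hkey : ∀ s : ℝ, t * s * (e * ((monkeyFs n q (k+1) t).card : ℝ) + 1) =
          ∑ i, q i * ((t / q i) * s * (e * (c i : ℝ) + 1)) := by
        intro s
        have h1 : ∀ i : Fin n, q i * ((t / q i) * s * (e * (c i : ℝ) + 1)) =
            t * s * (e * (c i : ℝ) + 1) := by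
          intro i
          have hne : q i ≠ 0 := (hq i).ne'
          field_simp
        rw [Finset.sum_congr rfl fun i _ => h1 i]
        rw [hcard]
        push_cast
        have : ∑ i : Fin n, t * s * (e * (c i : ℝ) + 1) =
            t * s * e * (∑ i, (c i : ℝ)) + (n : ℝ) * (t * s) := by
          rw [Finset.sum_congr rfl (fun i _ => by ring :
            ∀ i ∈ Finset.univ, t * s * (e * (c i : ℝ) + 1) = t * s * e * (c i : ℝ) + t * s)]
          rw [Finset.sum_add_distrib, ← Finset.mul_sum, Finset.sum_const, Finset.card_univ,
            Fintype.card_fin, nsmul_eq_mul]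
        rw [this, he]
        ring
      constructor
      · have h1 := hkey 1
        rw [show t * (e * ((monkeyFs n q (k+1) t).card : ℝ) + 1) =
            t * 1 * (e * ((monkeyFs n q (k+1) t).card : ℝ) + 1) by ring, h1]
        calc (1:ℝ) = ∑ i, q i := hqsum.symm
          _ < ∑ i, q i * ((t / q i) * 1 * (e * (c i : ℝ) + 1)) := by
            apply Finset.sum_lt_sum_of_nonempty
            · exact Finset.univ_nonempty_iff.2 (Fin.pos_iff_nonempty.1 hn)
            · intro i _
              have := (hIH i).1
              nlinarith [hq i]
      · rw [hkey m]
        calc ∑ i, q i * ((t / q i) * m * (e * (c i : ℝ) + 1)) ≤ ∑ i, q i := by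
              apply Finset.sum_le_sum
              intro i _
              have := (hIH i).2
              nlinarith [hq i]
          _ = 1 := hqsum
    · rw [monkeyFs, if_neg htle]
      simp only [Finset.card_empty, Nat.cast_zero, mul_zero, zero_add, mul_one]
      exact ⟨lt_of_not_ge htle, htm⟩

lemma monkey_prod_rpow {n : ℕ} {p : Fin n → ℝ} (hp : ∀ i, 0 < p i) (γ : ℝ) :
    ∀ w : List (Fin n), ((w.map p).prod) ^ γ = (w.map fun i => p i ^ γ).prod
  | [] => by simp [Real.one_rpow]
  | i :: w => by
      simp only [List.map_cons, List.prod_cons]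
      rw [Real.mul_rpow (hp i).le (monkey_prod_pos hp w).le, monkey_prod_rpow hp γ w]

theorem stmt8 (n : ℕ) (hn : 1 < n) (p : Fin n → ℝ) (hp : ∀ i, 0 < p i)
    (p₀ : ℝ) (hp₀ : 0 < p₀ ∧ p₀ < 1) (hsum : ∑ i, p i = 1 - p₀)
    (γ : ℝ) (hγ : 0 < γ) (hroot : ∑ i, p i ^ γ = 1) :
    ∃ c₁ c₂ : ℝ, ∀ x : ℝ, 0 ≤ x →
      c₁ < Real.log (Nat.card {w : List (Fin n) // p₀ * Real.exp (-x) ≤ wordProb p p₀ w}) - γ * x ∧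
      Real.log (Nat.card {w : List (Fin n) // p₀ * Real.exp (-x) ≤ wordProb p p₀ w}) - γ * x < c₂ := by
  classical
  -- basic facts
  have hn0 : 0 < n := by omega
  have hp1 : ∀ i, p i < 1 := by
    intro i
    have hle : p i ≤ ∑ j, p j :=
      Finset.single_le_sum (fun j _ => (hp j).le) (Finset.mem_univ i)
    have : ∑ j, p j < 1 := by rw [hsum]; linarith [hp₀.1]
    linarith
  set q : Fin n → ℝ := fun i => p i ^ γ with hqdef
  have hq : ∀ i, 0 < q i := fun i => Real.rpow_pos_of_pos (hp i) γ
  have hq1 : ∀ i, q i < 1 := fun i => Real.rpow_lt_one (hp i).le (hp1 i) hγ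
  have hqsum : ∑ i, q i = 1 := hroot
  -- max and min of q
  obtain ⟨iM, _, hiM⟩ := Finset.exists_max_image Finset.univ q ⟨⟨0, hn0⟩, Finset.mem_univ _⟩
  obtain ⟨im, _, him⟩ := Finset.exists_min_image Finset.univ q ⟨⟨0, hn0⟩, Finset.mem_univ _⟩
  set M : ℝ := q iM with hMdef
  set m : ℝ := q im with hmdef
  have hM0 : 0 < M := hq iM
  have hM1 : M < 1 := hq1 iM
  have hM : ∀ i, q i ≤ M := fun i => hiM i (Finset.mem_univ i)
  have hm0 : 0 < m := hq im
  have hm1 : m < 1 := hq1 im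
  have hm : ∀ i, m ≤ q i := fun i => him i (Finset.mem_univ i)
  have he1 : (1:ℝ) ≤ (n:ℝ) - 1 := by
    have : (2:ℝ) ≤ (n:ℝ) := by exact_mod_cast hn
    linarith
  set e : ℝ := (n:ℝ) - 1 with hedef
  have he0 : 0 < e := by linarith
  refine ⟨-Real.log 2 - Real.log e - 1, -Real.log e - Real.log m, ?_⟩
  intro x hx
  set t : ℝ := Real.exp (-(γ * x)) with htdef
  have ht0 : 0 < t := Real.exp_pos _
  have ht1 : t ≤ 1 := Real.exp_le_one_iff.2 (by nlinarith)
  have hlogt : Real.log t = -(γ * x) := Real.log_exp _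
  obtain ⟨k, hk⟩ := exists_pow_lt_of_lt_one ht0 hM1
  -- identify the subtype with the finset
  have hiff : ∀ w : List (Fin n),
      (p₀ * Real.exp (-x) ≤ wordProb p p₀ w) ↔ w ∈ monkeyFs n q k t := by
    intro w
    rw [monkey_mem_Fs hq hq1 hM0 hM k t ht0 hk w]
    unfold wordProb
    rw [mul_le_mul_iff_right₀ hp₀.1]
    have hP : 0 < (w.map p).prod := monkey_prod_pos hp w
    constructor
    · intro h
      have := Real.rpow_le_rpow (Real.exp_pos (-x)).le h hγ.le
      rw [monkey_prod_rpow hp γ w] at this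
      calc t = Real.exp (-x) ^ γ := by
            rw [Real.rpow_def_of_pos (Real.exp_pos _), Real.log_exp, htdef]
            congr 1
            ring
        _ ≤ (w.map fun i => p i ^ γ).prod := this
    · intro h
      have h2 : Real.exp (-x) ^ γ ≤ ((w.map p).prod) ^ γ := by
        rw [monkey_prod_rpow hp γ w]
        calc Real.exp (-x) ^ γ = t := by
              rw [Real.rpow_def_of_pos (Real.exp_pos _), Real.log_exp, htdef]
              congr 1
              ring
          _ ≤ _ := h
      exact (Real.rpow_le_rpow_iff (Real.exp_pos _).le hP.le hγ).1 h2
  have hcardeq : Nat.card {w : List (Fin n) // p₀ * Real.exp (-x) ≤ wordProb p p₀ w}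
      = (monkeyFs n q k t).card := by
    rw [Nat.card_congr (Equiv.subtypeEquivRight hiff), Nat.card_eq_finsetCard]
  rw [hcardeq]
  set N : ℕ := (monkeyFs n q k t).card with hNdef
  have htm : t * m ≤ 1 := by nlinarith
  obtain ⟨hinv1, hinv2⟩ := monkey_invariant hn0 hq hqsum hM0 hM hm0 hm k t ht0 hk htm
  rw [← hedef, ← hNdef] at hinv1 hinv2
  have hN1 : 1 ≤ N := by
    by_contra h
    have : N = 0 := by omega
    rw [this] at hinv1
    simp at hinv1
    linarith
  have hNpos : (0:ℝ) < (N:ℝ) := by exact_mod_cast hN1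
  have hNge1 : (1:ℝ) ≤ (N:ℝ) := by exact_mod_cast hN1
  constructor
  · -- lower bound
    have hlog2 : Real.log t + Real.log N > -Real.log 2 - Real.log e - 1 := by
      by_cases hth : 1/2 ≤ t
      · have h1 : Real.log (1/2 : ℝ) ≤ Real.log t := Real.log_le_log (by norm_num) hth
        have h2 : Real.log (1/2 : ℝ) = -Real.log 2 := by
          rw [one_div, Real.log_inv]
        have h3 : 0 ≤ Real.log N := Real.log_nonneg hNge1
        have h4 : 0 ≤ Real.log e := Real.log_nonneg he1
        linarith
      · push_neg at hth
        have hNlt : 1 / (2 * t * e) < (N:ℝ) := by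
          rw [div_lt_iff₀ (by positivity)]
          nlinarith
        have hlog : Real.log (1 / (2 * t * e)) < Real.log N :=
          Real.log_lt_log (by positivity) hNlt
        have hexpand : Real.log (1 / (2 * t * e)) = -(Real.log 2 + Real.log t + Real.log e) := by
          rw [one_div, Real.log_inv, Real.log_mul (by positivity) (by positivity),
            Real.log_mul (by norm_num) (by positivity)]
        rw [hexpand] at hlog
        linarith
    linarith [hlogt, hlog2]
  · -- upper bound
    have hNlt : (N:ℝ) < 1 / (e * t * m) := by
      rw [lt_div_iff₀ (by positivity)]
      nlinarith
    have hlog : Real.log N < Real.log (1 / (e * t * m)) :=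
      Real.log_lt_log hNpos hNlt
    have hexpand : Real.log (1 / (e * t * m)) = -(Real.log e + Real.log t + Real.log m) := by
      rw [one_div, Real.log_inv, Real.log_mul (by positivity) (by positivity),
        Real.log_mul (by positivity) (by positivity)]
    rw [hexpand] at hlog
    linarith [hlogt]
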